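/- Dealer decoupling lemma (core of Proposition 10): let p be any simple graph on m vertices {1,…,m} with encoded graph states |p_ℓ⟩ ∈ H_m, let H_E be a finite-dimensional complex inner-product space with an orthonormal family {|η⟩ : η ∈ {0,1}^{m−1}}, and let α : {0,1}^{m−1} → ℂ satisfy ∑_η |α_η|² = 1. Write (a,η) for the label string on {1,…,m} whose first entry is a and whose remaining entries are η. Then the vector Ψ := 2^{−1/2} ∑_η α_η (|0⟩_D ⊗ |p_{(0,η)}⟩ + |1⟩_D ⊗ |p_{(1,η)}⟩) ⊗ |η⟩_E ∈ H_1 ⊗ H_m ⊗ H_E is a unit vector, and the partial trace of |Ψ⟩⟨Ψ| over the m graph qubits equals (Id_2/2) ⊗ ρ_E with ρ_E = ∑_η |α_η|² |η⟩⟨η|; in particular the dealer qubit D is maximally mixed and uncorrelated with E, so the mutual information between E and D is zero. -/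

import Mathlib

noncomputable section

open scoped ComplexConjugate

/-- The Hilbert space of qubits indexed by `V`, as functions from bit strings to `ℂ`. -/
abbrev QState (V : Type) : Type := (V → Fin 2) → ℂ

/-- The diagonal operator with diagonal entries `d`. -/
def diagOp {V : Type} (d : (V → Fin 2) → ℂ) : QState V →ₗ[ℂ] QState V where
  toFun f := fun x => d x * f x
  map_add' f g := by funext x; simp [mul_add]
  map_smul' c f := by funext x; simp [smul_eq_mul]; ring

/-- The Pauli `Z` operator on qubit `i`. -/
def Zop {V : Type} (i : V) : QState V →ₗ[ℂ] QState V :=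
  diagOp fun x => (-1 : ℂ) ^ (x i : ℕ)

/-- The Pauli `X` operator on qubit `i` (bit flip). -/
def Xop {V : Type} [DecidableEq V] (i : V) : QState V →ₗ[ℂ] QState V where
  toFun f := fun x => f (Function.update x i (x i + 1))
  map_add' f g := rfl
  map_smul' c f := rfl

/-- The phase gate `S` on qubit `i`, sending `|x⟩` to `(-i)^(x i) |x⟩`. -/
def Sop {V : Type} (i : V) : QState V →ₗ[ℂ] QState V :=
  diagOp fun x => (-Complex.I) ^ (x i : ℕ)

/-- The Pauli `Y` operator on qubit `i`, `Y = i·X·Z`. -/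
def Yop {V : Type} [DecidableEq V] (i : V) : QState V →ₗ[ℂ] QState V :=
  Complex.I • (Xop i ∘ₗ Zop i)

/-- `qVal G x` is the number of edges of `G` both of whose endpoints carry bit 1 in `x`. -/
def qVal {V : Type} (G : SimpleGraph V) (x : V → Fin 2) : ℕ :=
  Nat.card {e : Sym2 V // e ∈ G.edgeSet ∧ ∀ v ∈ e, x v = 1}

/-- The graph state `|G⟩`, with amplitudes `2^{-n/2} (-1)^{q_G(x)}`. -/
def graphState {V : Type} [Fintype V] (G : SimpleGraph V) : QState V :=
  fun x => (((Real.sqrt 2)⁻¹ ^ Fintype.card V : ℝ) : ℂ) * (-1 : ℂ) ^ qVal G x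

/-- The labeled/encoded graph state `|𝒢_ℓ⟩ = (∏_i Z_i^{ℓ_i}) (∏_{j ∈ Vsq} S_j) |G⟩`,
with square-vertex set `Vsq`. -/
def encSq {V : Type} [Fintype V] (G : SimpleGraph V) (Vsq : Set V) (ℓ : V → Fin 2) : QState V :=
  fun x => (-1 : ℂ) ^ Nat.card {i : V // ℓ i = 1 ∧ x i = 1}
    * (-Complex.I) ^ Nat.card {j : V // j ∈ Vsq ∧ x j = 1}
    * graphState G x

/-- The encoded graph state `|G_ℓ⟩` (no square vertices). -/
def encG {V : Type} [Fintype V] (G : SimpleGraph V) (ℓ : V → Fin 2) : QState V :=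
  encSq G ∅ ℓ

open Classical in
/-- The stabilizer operator of vertex `i`: `X_i ∏_{j ∈ N_i} Z_j` for circular vertices,
`Y_i ∏_{j ∈ N_i} Z_j` for square vertices (`i ∈ Vsq`). -/
def Kop {V : Type} [DecidableEq V] (G : SimpleGraph V) (Vsq : Set V) (i : V) :
    QState V →ₗ[ℂ] QState V :=
  (if i ∈ Vsq then Yop i else Xop i) ∘ₗ
    diagOp fun x => (-1 : ℂ) ^ Nat.card {j : V // G.Adj i j ∧ x j = 1}

/-- Merge a bit string on `P` with a bit string on the complement of `P`. -/
def mergeBits {V : Type} [DecidableEq V] (P : Finset V) (a : {i // i ∈ P} → Fin 2)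
    (c : {i // i ∉ P} → Fin 2) : V → Fin 2 :=
  fun i => if h : i ∈ P then a ⟨i, h⟩ else c ⟨i, h⟩

/-- The reduced density matrix of the pure state `ψ` on the qubits in `P`:
`(a, b) ↦ ∑_c ⟨a⊔c|ψ⟩⟨ψ|b⊔c⟩`. -/
def red {V : Type} [Fintype V] [DecidableEq V] (P : Finset V) (ψ : QState V) :
    ({i // i ∈ P} → Fin 2) → ({i // i ∈ P} → Fin 2) → ℂ :=
  fun a b => ∑ c : {i // i ∉ P} → Fin 2, ψ (mergeBits P a c) * conj (ψ (mergeBits P b c))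

/-- The computational basis vector `|y⟩`. -/
def basisVec {V : Type} [Fintype V] [DecidableEq V] (y : V → Fin 2) : QState V :=
  fun x => if x = y then 1 else 0

/-- The matrix entry `⟨x|A|y⟩` of an operator. -/
def opEntry {V : Type} [Fintype V] [DecidableEq V] (A : QState V →ₗ[ℂ] QState V)
    (x y : V → Fin 2) : ℂ := A (basisVec y) x

/-- `A` acts trivially outside `P`: it equals `M ⊗ Id` for some operator `M` on the
qubits in `P`. -/
def trivialOutside {V : Type} [Fintype V] [DecidableEq V] (P : Finset V)
    (A : QState V →ₗ[ℂ] QState V) : Prop :=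
  ∃ M : ({i // i ∈ P} → Fin 2) → ({i // i ∈ P} → Fin 2) → ℂ,
    ∀ a b c c', opEntry A (mergeBits P a c) (mergeBits P b c') = if c = c' then M a b else 0

/-- The product `∏_{i ∈ T} K_i` of (commuting) operators, taken in sorted order. -/
def prodOps {V : Type} [LinearOrder V] (T : Finset V)
    (K : V → QState V →ₗ[ℂ] QState V) : QState V →ₗ[ℂ] QState V :=
  (T.sort (· ≤ ·)).foldr (fun i acc => K i ∘ₗ acc) LinearMap.id


/-- The rank-one operator `|u⟩⟨v|` (conjugate-linear in `v`). -/
def outer {E : Type} [NormedAddCommGroup E] [InnerProductSpace ℂ E] (u v : E) : E →ₗ[ℂ] E where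
  toFun w := (inner ℂ v w : ℂ) • u
  map_add' w w' := by simp [inner_add_right, add_smul]
  map_smul' c w := by simp [inner_smul_right, smul_smul]


section AuxLemmas

lemma sum_encG_mul_conj {V : Type} [Fintype V] [DecidableEq V] (G : SimpleGraph V)
    (ℓ ℓ' : V → Fin 2) :
    ∑ x : V → Fin 2, encG G ℓ x * conj (encG G ℓ' x) = if ℓ = ℓ' then 1 else 0 := by
  have hempty : ∀ x : V → Fin 2, Nat.card {j : V // j ∈ (∅ : Set V) ∧ x j = 1} = 0 := by
    intro x
    have : IsEmpty {j : V // j ∈ (∅ : Set V) ∧ x j = 1} := ⟨fun ⟨j, hj, _⟩ => hj⟩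
    exact Nat.card_of_isEmpty
  have hcount : ∀ (t : V → Fin 2) (x : V → Fin 2),
      (-1:ℂ) ^ Nat.card {i : V // t i = 1 ∧ x i = 1}
        = ∏ i, if t i = 1 ∧ x i = 1 then (-1:ℂ) else 1 := by
    intro t x
    rw [Nat.card_eq_fintype_card, Fintype.card_subtype, ← Finset.prod_const, Finset.prod_filter]
  have hq : ∀ x : V → Fin 2, ((-1:ℂ) ^ qVal G x) * ((-1:ℂ) ^ qVal G x) = 1 := by
    intro x; rw [← mul_pow]; norm_num
  have hs : ((((Real.sqrt 2)⁻¹ ^ Fintype.card V : ℝ)) : ℂ)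
      * ((((Real.sqrt 2)⁻¹ ^ Fintype.card V : ℝ)) : ℂ) = ((2:ℂ)⁻¹) ^ Fintype.card V := by
    rw [← Complex.ofReal_mul, ← pow_add, ← two_mul, pow_mul]
    norm_num [Real.sq_sqrt]
  have hterm : ∀ x : V → Fin 2, encG G ℓ x * conj (encG G ℓ' x)
      = ((2:ℂ)⁻¹) ^ Fintype.card V
        * ∏ i, ((if ℓ i = 1 ∧ x i = 1 then (-1:ℂ) else 1)
            * (if ℓ' i = 1 ∧ x i = 1 then (-1:ℂ) else 1)) := by
    intro x
    simp only [encG, encSq, hempty, pow_zero, mul_one, graphState, map_mul, map_pow, map_neg,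
      map_one, Complex.conj_ofReal]
    rw [hcount ℓ x, hcount ℓ' x, Finset.prod_mul_distrib]
    linear_combination (∏ i, if ℓ i = 1 ∧ x i = 1 then (-1:ℂ) else 1)
        * (∏ i, if ℓ' i = 1 ∧ x i = 1 then (-1:ℂ) else 1)
        * (((((Real.sqrt 2)⁻¹ ^ Fintype.card V : ℝ)) : ℂ)
            * ((((Real.sqrt 2)⁻¹ ^ Fintype.card V : ℝ)) : ℂ) * hq x + hs)
  simp only [hterm, ← Finset.mul_sum]
  rw [← Fintype.prod_sum (fun i b => (if ℓ i = 1 ∧ b = 1 then (-1:ℂ) else 1)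
      * (if ℓ' i = 1 ∧ b = 1 then (-1:ℂ) else 1))]
  have h2 : ∀ i : V, (∑ b : Fin 2, (if ℓ i = 1 ∧ b = 1 then (-1:ℂ) else 1)
      * (if ℓ' i = 1 ∧ b = 1 then (-1:ℂ) else 1)) = if ℓ i = ℓ' i then 2 else 0 := by
    intro i
    rcases Fin.exists_fin_two.mp ⟨ℓ i, rfl⟩ with h | h <;>
      rcases Fin.exists_fin_two.mp ⟨ℓ' i, rfl⟩ with h' | h' <;>
        simp [Fin.sum_univ_two, h, h'] <;> norm_num
  simp only [h2]
  by_cases h : ℓ = ℓ'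
  · simp [h, Finset.prod_const, ← mul_pow]
  · obtain ⟨i, hi⟩ := Function.ne_iff.mp h
    rw [Finset.prod_eq_zero (Finset.mem_univ i) (by simp [hi]), if_neg h, mul_zero]

variable {E : Type} [NormedAddCommGroup E] [InnerProductSpace ℂ E]

lemma outer_smul_left (a : ℂ) (u v : E) : outer (a • u) v = a • outer u v := by
  apply LinearMap.ext; intro w
  simp only [outer, LinearMap.smul_apply, LinearMap.coe_mk, AddHom.coe_mk]
  rw [smul_comm]

lemma outer_smul_right (a : ℂ) (u v : E) : outer u (a • v) = conj a • outer u v := by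
  apply LinearMap.ext; intro w
  simp [outer, inner_smul_left, smul_smul, mul_comm]

lemma outer_sum_left {ι : Type} (s : Finset ι) (f : ι → E) (v : E) :
    outer (∑ i ∈ s, f i) v = ∑ i ∈ s, outer (f i) v := by
  apply LinearMap.ext; intro w
  simp [outer, Finset.smul_sum]

lemma outer_sum_right {ι : Type} (s : Finset ι) (u : E) (g : ι → E) :
    outer u (∑ i ∈ s, g i) = ∑ i ∈ s, outer u (g i) := by
  apply LinearMap.ext; intro w
  simp [outer, sum_inner, Finset.sum_smul]

lemma outer_smul_sum {ι : Type} [Fintype ι] (c : ℂ) (f g : ι → ℂ) (v : ι → E) :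
    outer (c • ∑ η, f η • v η) (c • ∑ η, g η • v η)
      = ∑ η, ∑ η', ((c * conj c) * (f η * conj (g η'))) • outer (v η) (v η') := by
  rw [outer_smul_left, outer_smul_right, outer_sum_left]
  simp only [outer_sum_right, outer_smul_left, outer_smul_right, Finset.smul_sum, smul_smul]
  refine Finset.sum_congr rfl fun η _ => Finset.sum_congr rfl fun η' _ => ?_
  congr 1
  ring

end AuxLemmas

/-- The components (indexed by the dealer bit `d` and the graph-qubit basis point `x`)
of the vector `Ψ = 2^{−1/2} ∑_η α_η (|0⟩_D |p_{(0,η)}⟩ + |1⟩_D |p_{(1,η)}⟩) ⊗ |η⟩_E`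
of `H_1 ⊗ H_m ⊗ H_E`. -/
def dealerVec {m : ℕ} (p : SimpleGraph (Fin (m + 1))) {E : Type} [NormedAddCommGroup E]
    [InnerProductSpace ℂ E] (ηv : (Fin m → Fin 2) → E) (α : (Fin m → Fin 2) → ℂ)
    (d : Fin 2) (x : Fin (m + 1) → Fin 2) : E :=
  (((Real.sqrt 2)⁻¹ : ℝ) : ℂ) • ∑ η, (α η * encG p (Fin.cons d η) x) • ηv η

/-- dealer decoupling lemma: for any graph `p` on `m+1 ≥ 1` vertices,
any orthonormal family `{|η⟩}` in a finite-dimensional inner product space `H_E`, and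
amplitudes `α` with `∑ |α_η|² = 1`, the vector `Ψ` above is a unit vector, and the
partial trace of `|Ψ⟩⟨Ψ|` over the graph qubits equals `(Id₂/2) ⊗ ρ_E` with
`ρ_E = ∑ |α_η|² |η⟩⟨η|` (stated blockwise in the dealer indices); in particular the
dealer qubit is maximally mixed and uncorrelated with `E`. -/
theorem dealer_decoupling (m : ℕ) (p : SimpleGraph (Fin (m + 1))) (E : Type)
    [NormedAddCommGroup E] [InnerProductSpace ℂ E] [FiniteDimensional ℂ E]
    (ηv : (Fin m → Fin 2) → E) (hη : Orthonormal ℂ ηv)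
    (α : (Fin m → Fin 2) → ℂ) (hα : (∑ η, ‖α η‖ ^ 2) = 1) :
    (∑ d : Fin 2, ∑ x : Fin (m + 1) → Fin 2, ‖dealerVec p ηv α d x‖ ^ 2) = 1 ∧
    (∀ d d' : Fin 2,
      (∑ x : Fin (m + 1) → Fin 2, outer (dealerVec p ηv α d x) (dealerVec p ηv α d' x)) =
        (if d = d' then (1 / 2 : ℂ) else 0) •
          ∑ η, ((‖α η‖ ^ 2 : ℝ) : ℂ) • outer (ηv η) (ηv η)) := by
  have hcc : (((Real.sqrt 2)⁻¹ : ℝ) : ℂ) * conj (((Real.sqrt 2)⁻¹ : ℝ) : ℂ) = 2⁻¹ := by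
    rw [Complex.conj_ofReal, ← Complex.ofReal_mul, ← mul_inv,
      Real.mul_self_sqrt (by norm_num : (0:ℝ) ≤ 2)]
    norm_num
  have hαC : (∑ η : Fin m → Fin 2, conj (α η) * α η) = 1 := by
    have : ∀ η : Fin m → Fin 2, conj (α η) * α η = ((‖α η‖ ^ 2 : ℝ) : ℂ) := by
      intro η
      rw [mul_comm, Complex.mul_conj']
      push_cast
      ring
    rw [Finset.sum_congr rfl fun η _ => this η, ← Complex.ofReal_sum]
    rw [hα]
    norm_num
  constructor
  · -- unit vector
    have hinC : (∑ d : Fin 2, ∑ x : Fin (m + 1) → Fin 2,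
        (inner ℂ (dealerVec p ηv α d x) (dealerVec p ηv α d x) : ℂ)) = 1 := by
      have h1 : ∀ (d : Fin 2) (x : Fin (m + 1) → Fin 2),
          (inner ℂ (dealerVec p ηv α d x) (dealerVec p ηv α d x) : ℂ)
            = 2⁻¹ * ∑ η, conj (α η * encG p (Fin.cons d η) x)
                * (α η * encG p (Fin.cons d η) x) := by
        intro d x
        unfold dealerVec
        rw [inner_smul_left, inner_smul_right, hη.inner_sum, ← mul_assoc, mul_comm
          (conj (((Real.sqrt 2)⁻¹ : ℝ) : ℂ)), hcc]
      simp only [h1, ← Finset.mul_sum]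
      have h2 : ∀ d : Fin 2, (∑ x : Fin (m + 1) → Fin 2, ∑ η : Fin m → Fin 2,
          conj (α η * encG p (Fin.cons d η) x) * (α η * encG p (Fin.cons d η) x)) = 1 := by
        intro d
        rw [Finset.sum_comm]
        have h3 : ∀ η : Fin m → Fin 2, (∑ x : Fin (m + 1) → Fin 2,
            conj (α η * encG p (Fin.cons d η) x) * (α η * encG p (Fin.cons d η) x))
              = conj (α η) * α η := by
          intro η
          have h4 := sum_encG_mul_conj p (Fin.cons d η) (Fin.cons d η)
          rw [if_pos rfl] at h4
          calc (∑ x : Fin (m + 1) → Fin 2,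
              conj (α η * encG p (Fin.cons d η) x) * (α η * encG p (Fin.cons d η) x))
              = (conj (α η) * α η) * ∑ x : Fin (m + 1) → Fin 2,
                  encG p (Fin.cons d η) x * conj (encG p (Fin.cons d η) x) := by
                rw [Finset.mul_sum]
                refine Finset.sum_congr rfl fun x _ => ?_
                rw [map_mul]
                ring
            _ = conj (α η) * α η := by rw [h4, mul_one]
        rw [Finset.sum_congr rfl fun η _ => h3 η, hαC]
      simp only [h2, mul_one]
      norm_num [Fin.sum_univ_two]
    have hre1 : ∀ u : E, ‖u‖ ^ 2 = (inner ℂ u u : ℂ).re := by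
      intro u
      have h := inner_self_eq_norm_sq (𝕜 := ℂ) u
      rw [RCLike.re_to_complex] at h
      exact h.symm
    have hre : (∑ d : Fin 2, ∑ x : Fin (m + 1) → Fin 2, ‖dealerVec p ηv α d x‖ ^ 2)
        = (∑ d : Fin 2, ∑ x : Fin (m + 1) → Fin 2,
            (inner ℂ (dealerVec p ηv α d x) (dealerVec p ηv α d x) : ℂ)).re := by
      rw [Complex.re_sum]
      refine Finset.sum_congr rfl fun d _ => ?_
      rw [Complex.re_sum]
      exact Finset.sum_congr rfl fun x _ => hre1 _
    rw [hre, hinC]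
    simp
  · -- reduced state
    intro d d'
    have expand : ∀ x : Fin (m + 1) → Fin 2,
        outer (dealerVec p ηv α d x) (dealerVec p ηv α d' x)
          = ∑ η, ∑ η', (((((Real.sqrt 2)⁻¹ : ℝ) : ℂ) * conj (((Real.sqrt 2)⁻¹ : ℝ) : ℂ))
              * ((α η * encG p (Fin.cons d η) x)
                * conj (α η' * encG p (Fin.cons d' η') x))) • outer (ηv η) (ηv η') := by
      intro x
      exact outer_smul_sum _ _ _ _
    have hx : ∀ η η' : Fin m → Fin 2,
        (∑ x : Fin (m + 1) → Fin 2,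
          (((((Real.sqrt 2)⁻¹ : ℝ) : ℂ) * conj (((Real.sqrt 2)⁻¹ : ℝ) : ℂ))
            * ((α η * encG p (Fin.cons d η) x) * conj (α η' * encG p (Fin.cons d' η') x))))
          = if d = d' ∧ η = η' then 2⁻¹ * (α η * conj (α η')) else 0 := by
      intro η η'
      have step : ∀ x : Fin (m + 1) → Fin 2,
          (((((Real.sqrt 2)⁻¹ : ℝ) : ℂ) * conj (((Real.sqrt 2)⁻¹ : ℝ) : ℂ))
            * ((α η * encG p (Fin.cons d η) x) * conj (α η' * encG p (Fin.cons d' η') x)))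
          = (2⁻¹ * (α η * conj (α η')))
              * (encG p (Fin.cons d η) x * conj (encG p (Fin.cons d' η') x)) := by
        intro x
        rw [map_mul, hcc]
        ring
      rw [Finset.sum_congr rfl fun x _ => step x, ← Finset.mul_sum,
        sum_encG_mul_conj p (Fin.cons d η) (Fin.cons d' η')]
      simp only [Fin.cons_inj]
      split_ifs <;> simp
    calc (∑ x : Fin (m + 1) → Fin 2,
        outer (dealerVec p ηv α d x) (dealerVec p ηv α d' x))
        = ∑ η, ∑ η', (if d = d' ∧ η = η' then 2⁻¹ * (α η * conj (α η')) else 0)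
            • outer (ηv η) (ηv η') := by
          simp only [expand]
          rw [Finset.sum_comm]
          refine Finset.sum_congr rfl fun η _ => ?_
          rw [Finset.sum_comm]
          refine Finset.sum_congr rfl fun η' _ => ?_
          rw [← Finset.sum_smul, hx η η']
      _ = (if d = d' then (1 / 2 : ℂ) else 0) •
            ∑ η, ((‖α η‖ ^ 2 : ℝ) : ℂ) • outer (ηv η) (ηv η) := by
          by_cases hd : d = d'
          · subst hd
            rw [if_pos rfl, Finset.smul_sum]
            refine Finset.sum_congr rfl fun η _ => ?_
            rw [Finset.sum_eq_single η]
            · rw [if_pos ⟨rfl, rfl⟩, smul_smul]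
              congr 1
              rw [Complex.mul_conj']
              push_cast
              ring
            · intro η' _ hne
              rw [if_neg (by simp [Ne.symm hne]), zero_smul]
            · intro h
              exact absurd (Finset.mem_univ η) h
          · simp [hd]

end
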